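/- Under the standing setup, for every index j ∈ {1, …, n+1} with j ≠ k_3, the standard basis vector satisfies ⟨v_j, x_0⟩ ≥ 0. -/
import Mathlib


namespace Prism

/-- Gram matrix of a C-type lattice with parameters `a 1, …, a n` (vertices `x_0, …, x_n`). -/
def CGram (n : ℕ) (a : ℕ → ℤ) : Fin (n + 1) → Fin (n + 1) → ℤ := fun i j =>
  if (i : ℕ) = (j : ℕ) then (if (i : ℕ) = 0 then 4 else a (i : ℕ))
  else if ((i : ℕ) = 0 ∧ (j : ℕ) = 1) ∨ ((i : ℕ) = 1 ∧ (j : ℕ) = 0) then -2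
  else if (i : ℕ) + 1 = (j : ℕ) ∨ (j : ℕ) + 1 = (i : ℕ) then -1
  else 0

/-- The symmetric bilinear form of a C-type lattice. -/
def CForm (n : ℕ) (a : ℕ → ℤ) (v w : Fin (n + 1) → ℤ) : ℤ :=
  ∑ i : Fin (n + 1), ∑ j : Fin (n + 1), v i * CGram n a i j * w j

/-- Conditions on the parameters of a C-type lattice: `n ≥ 1`, all `a_i ≥ 2`, `a_1 ≥ 3`. -/
def CTypeParams (n : ℕ) (a : ℕ → ℤ) : Prop :=
  1 ≤ n ∧ (∀ i, 1 ≤ i → i ≤ n → 2 ≤ a i) ∧ 3 ≤ a 1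

/-- Numerator/denominator pair of the Hirzebruch–Jung continued fraction `[a_1, …, a_k]⁻`. -/
def hjPair : List ℤ → ℤ × ℤ
  | [] => (1, 0)
  | x :: l => (x * (hjPair l).1 - (hjPair l).2, (hjPair l).1)

/-- `a 1, …, a n` are the coefficients of the HJ expansion of `(2q-p)/(q-p)`, all `≥ 2`
(`a_1 ≥ 3` being forced since `q > p`); i.e. the data defining the lattice `C(p,q)`. -/
def IsCpq (p q : ℤ) (n : ℕ) (a : ℕ → ℤ) : Prop :=
  CTypeParams n a ∧ hjPair ((List.range' 1 n).map fun i => a i) = (2 * q - p, q - p)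

/-- Standard dot product on `ℤ^m`. -/
def dotF {m : ℕ} (v w : Fin m → ℤ) : ℤ := ∑ i, v i * w i

/-- Orthogonal complement of `σ` in `ℤ^m`. -/
def perp {m : ℕ} (σ : Fin m → ℤ) : Submodule ℤ (Fin m → ℤ) where
  carrier := {v | dotF v σ = 0}
  add_mem' := by
    intro a b ha hb
    simp only [Set.mem_setOf_eq, dotF, Pi.add_apply, add_mul, Finset.sum_add_distrib] at *
    omega
  zero_mem' := by simp [dotF]
  smul_mem' := by
    intro c v hv
    simp only [Set.mem_setOf_eq, dotF, Pi.smul_apply, smul_eq_mul, mul_assoc] at *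
    rw [← Finset.mul_sum, hv, mul_zero]

/-- Changemaker vector in `ℤ^m`. -/
def IsChangemaker (m : ℕ) (σ : Fin m → ℤ) : Prop :=
  Monotone σ ∧ (∀ i, 0 ≤ σ i) ∧
    ∀ k : ℤ, 0 ≤ k → k ≤ ∑ i, σ i → ∃ S : Finset (Fin m), k = ∑ i ∈ S, σ i

/-- The interval `x_a + x_{a+1} + ⋯ + x_b` in a C-type lattice of rank `n+1`. -/
def intVec (n : ℕ) (a b : ℕ) : Fin (n + 1) → ℤ := fun i =>
  if a ≤ (i : ℕ) ∧ (i : ℕ) ≤ b then 1 else 0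

/-- Breakability with respect to the C-type form. -/
def CBreakable (n : ℕ) (a : ℕ → ℤ) (ℓ : Fin (n + 1) → ℤ) : Prop :=
  ∃ x y : Fin (n + 1) → ℤ, ℓ = x + y ∧ 3 ≤ CForm n a x x ∧ 3 ≤ CForm n a y y ∧
    CForm n a x y = -1

/-- Breakability inside the lattice `(σ)^⊥ ⊆ ℤ^m`. -/
def PerpBreakable {m : ℕ} (σ : Fin m → ℤ) (ℓ : Fin m → ℤ) : Prop :=
  ∃ x y : Fin m → ℤ, x ∈ perp σ ∧ y ∈ perp σ ∧ ℓ = x + y ∧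
    3 ≤ dotF x x ∧ 3 ≤ dotF y y ∧ dotF x y = -1

/-- The number `δ([I],[J])` of dangling edges for intervals `[a,b]` and `[c,d]`,
counted with multiplicity (the edge `x_0x_1` is doubled). -/
def deltaCount (n a b c d : ℕ) : ℤ :=
  ∑ k ∈ Finset.range n,
    if (((a ≤ k ∧ k ≤ b) ∧ (c ≤ k + 1 ∧ k + 1 ≤ d)) ∨
          ((c ≤ k ∧ k ≤ d) ∧ (a ≤ k + 1 ∧ k + 1 ≤ b))) ∧
        (¬((a ≤ k ∧ k ≤ b) ∧ (c ≤ k ∧ k ≤ d)) ∨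
          ¬((a ≤ k + 1 ∧ k + 1 ≤ b) ∧ (c ≤ k + 1 ∧ k + 1 ≤ d)))
    then (if k = 0 then 2 else 1) else 0

/-- `v_j` is tight: `σ_j = 1 + σ_0 + ⋯ + σ_{j-1}`. -/
def IsTight {m : ℕ} (σ : Fin m → ℤ) (j : Fin m) : Prop :=
  σ j = 1 + ∑ i ∈ Finset.Iio j, σ i

/-- The vector `2e_0 + e_1 + ⋯ + e_{j-1} - e_j`. -/
def tightVec (m : ℕ) (j : Fin m) : Fin m → ℤ := fun i =>
  if i = j then -1 else if i < j then (if (i : ℕ) = 0 then 2 else 1) else 0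

/-- `A ⊆ {0,…,j-1}` with `σ_j = ∑_{i ∈ A} σ_i`, maximizing `∑_{i ∈ A} 2^i`. -/
def MaxSubsetRep {m : ℕ} (σ : Fin m → ℤ) (j : Fin m) (A : Finset (Fin m)) : Prop :=
  A ⊆ Finset.Iio j ∧ σ j = ∑ i ∈ A, σ i ∧
    ∀ B ⊆ Finset.Iio j, σ j = ∑ i ∈ B, σ i →
      ∑ i ∈ B, 2 ^ (i : ℕ) ≤ ∑ i ∈ A, 2 ^ (i : ℕ)

/-- The vector `∑_{i ∈ A} e_i - e_j`. -/
def subsetVec (m : ℕ) (A : Finset (Fin m)) (j : Fin m) : Fin m → ℤ := fun i =>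
  if i = j then -1 else if i ∈ A then 1 else 0

/-- `v` is the standard basis vector `v_j` of the changemaker lattice `(σ)^⊥`. -/
def IsStdBasisVec {m : ℕ} (σ : Fin m → ℤ) (j : Fin m) (v : Fin m → ℤ) : Prop :=
  (IsTight σ j ∧ v = tightVec m j) ∨
    (¬IsTight σ j ∧ ∃ A : Finset (Fin m), MaxSubsetRep σ j A ∧ v = subsetVec m A j)

/-- The subset `A` has a gappy index for `v_j`: some `i ∈ A` with `i < j - 1`, `i + 1 ∉ A`. -/
def IsGappyAt {m : ℕ} (A : Finset (Fin m)) (j : Fin m) : Prop :=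
  ∃ i ∈ A, (i : ℕ) + 1 < (j : ℕ) ∧ ∀ i' ∈ A, (i' : ℕ) ≠ (i : ℕ) + 1

/-- The reflection about `x_0^⊥` (using that `⟨x_0, v⟩` is always even and `⟨x_0,x_0⟩ = 4`). -/
def cRefl (n : ℕ) (a : ℕ → ℤ) (v : Fin (n + 1) → ℤ) : Fin (n + 1) → ℤ :=
  v - (CForm n a (Pi.single 0 1) v / 2) • Pi.single 0 1

section Helpers

lemma dotF_single_right {m : ℕ} (v : Fin m → ℤ) (k : Fin m) :
    dotF v (Pi.single k 1) = v k := by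
  unfold dotF
  rw [Finset.sum_eq_single k]
  · rw [Pi.single_eq_same, mul_one]
  · intro i _ hi; rw [Pi.single_eq_of_ne hi, mul_zero]
  · intro h; exact absurd (Finset.mem_univ k) h

lemma dotF_add_right {m : ℕ} (v w u : Fin m → ℤ) :
    dotF v (w + u) = dotF v w + dotF v u := by
  simp [dotF, mul_add, Finset.sum_add_distrib]

lemma dotF_sub_right {m : ℕ} (v w u : Fin m → ℤ) :
    dotF v (w - u) = dotF v w - dotF v u := by
  simp [dotF, mul_sub, Finset.sum_sub_distrib]

lemma dotF_comm {m : ℕ} (v w : Fin m → ℤ) : dotF v w = dotF w v := by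
  simp [dotF, mul_comm]

lemma dotF_combo_pos {m : ℕ} (v : Fin m → ℤ) (a b c d : Fin m) :
    dotF v (Pi.single a 1 + Pi.single b 1 + Pi.single c 1 - Pi.single d 1) =
      v a + v b + v c - v d := by
  rw [dotF_sub_right, dotF_add_right, dotF_add_right,
    dotF_single_right, dotF_single_right, dotF_single_right, dotF_single_right]

lemma dotF_combo_neg {m : ℕ} (v : Fin m → ℤ) (a b c d : Fin m) :
    dotF v (Pi.single a 1 - Pi.single b 1 - Pi.single c 1 + Pi.single d 1) =
      v a - v b - v c + v d := by
  rw [dotF_add_right, dotF_sub_right, dotF_sub_right,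
    dotF_single_right, dotF_single_right, dotF_single_right, dotF_single_right]

lemma mem_perp_iff {m : ℕ} (σ v : Fin m → ℤ) : v ∈ perp σ ↔ dotF v σ = 0 := Iff.rfl

/-- Parity: any element of `(σ)^⊥` pairs evenly with the image of `x_0`. -/
lemma even_pairing (n : ℕ) (aa : ℕ → ℤ) (σ : Fin (n + 2) → ℤ)
    (φ : (Fin (n + 1) → ℤ) ≃ₗ[ℤ] perp σ)
    (hφ : ∀ v w : Fin (n + 1) → ℤ,
      CForm n aa v w = dotF (φ v : Fin (n + 2) → ℤ) (φ w : Fin (n + 2) → ℤ))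
    (v : Fin (n + 2) → ℤ) (hv : dotF v σ = 0) :
    2 ∣ dotF v (φ (Pi.single 0 1) : Fin (n + 2) → ℤ) := by
  obtain ⟨w, hw⟩ := φ.surjective ⟨v, hv⟩
  have hwv : (φ w : Fin (n + 2) → ℤ) = v := by rw [hw]
  have hform := hφ w (Pi.single 0 1)
  rw [hwv] at hform
  rw [← hform]
  unfold CForm
  apply Finset.dvd_sum; intro i _
  apply Finset.dvd_sum; intro j _
  rcases eq_or_ne j 0 with hj | hj
  · subst hj
    rw [Pi.single_eq_same, mul_one]
    have hdvd : (2 : ℤ) ∣ CGram n aa i 0 := by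
      unfold CGram
      have h0 : ((0 : Fin (n + 1)) : ℕ) = 0 := rfl
      split_ifs with h1 h2 h3 <;> simp_all <;> omega
    exact hdvd.mul_left _
  · rw [Pi.single_eq_of_ne hj, mul_zero]
    exact dvd_zero 2

lemma subsetVec_perp {m : ℕ} (σ : Fin m → ℤ) (j : Fin m) (A : Finset (Fin m))
    (hjA : j ∉ A) (hsum : σ j = ∑ i ∈ A, σ i) :
    dotF (subsetVec m A j) σ = 0 := by
  unfold dotF subsetVec
  have hterm : ∀ i ∈ Finset.univ,
      (if i = j then (-1 : ℤ) else if i ∈ A then 1 else 0) * σ i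
        = (if i ∈ A then σ i else 0) - (if i = j then σ i else 0) := by
    intro i _
    by_cases h1 : i = j
    · subst h1; simp [hjA]
    · by_cases h2 : i ∈ A <;> simp [h1, h2]
  rw [Finset.sum_congr rfl hterm, Finset.sum_sub_distrib]
  rw [Finset.sum_ite_mem, Finset.univ_inter,
    Finset.sum_ite_eq' Finset.univ j σ, if_pos (Finset.mem_univ j)]
  omega

lemma tightVec_apply {m : ℕ} (j k : Fin m) (hk : (k : ℕ) ≠ 0) :
    tightVec m j k = if (k : ℕ) = (j : ℕ) then -1 else if (k : ℕ) < (j : ℕ) then 1 else 0 := by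
  unfold tightVec
  have hkj : (k = j) ↔ ((k : ℕ) = (j : ℕ)) := Fin.ext_iff
  have hlt : (k < j) ↔ ((k : ℕ) < (j : ℕ)) := Iff.rfl
  by_cases h1 : (k : ℕ) = (j : ℕ)
  · simp [hkj.mpr h1, h1]
  · by_cases h2 : (k : ℕ) < (j : ℕ)
    · simp [hkj, h1, hlt.mpr h2, hk, h2]
    · have h3 : ¬ k < j := fun h => h2 (hlt.mp h)
      simp [hkj, h1, h2, h3]

lemma subsetVec_apply_ne {m : ℕ} (A : Finset (Fin m)) (j k : Fin m) (h : k ≠ j) :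
    subsetVec m A j k = if k ∈ A then 1 else 0 := by
  simp [subsetVec, h]

lemma subsetVec_apply_self {m : ℕ} (A : Finset (Fin m)) (j : Fin m) :
    subsetVec m A j j = -1 := by
  simp [subsetVec]

end Helpers

/-- Lemma 4.17: for every `j ≠ k_3`, `⟨v_j, x_0⟩ ≥ 0`. -/
theorem statement12
    (n : ℕ) (aa : ℕ → ℤ) (hC : CTypeParams n aa)
    (σ : Fin (n + 2) → ℤ) (hσ : IsChangemaker (n + 2) σ)
    (φ : (Fin (n + 1) → ℤ) ≃ₗ[ℤ] perp σ)
    (hφ : ∀ v w : Fin (n + 1) → ℤ,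
      CForm n aa v w = dotF (φ v : Fin (n + 2) → ℤ) (φ w : Fin (n + 2) → ℤ))
    (k₁ k₂ k₃ : Fin (n + 2)) (hk₁ : 0 < k₁) (hk₁₂ : k₁ < k₂) (hk₂₃ : k₂ < k₃)
    (hx0 : (φ (Pi.single 0 1) : Fin (n + 2) → ℤ) =
        Pi.single 0 1 + Pi.single k₁ 1 + Pi.single k₂ 1 - Pi.single k₃ 1 ∨
      (φ (Pi.single 0 1) : Fin (n + 2) → ℤ) =
        Pi.single 0 1 - Pi.single k₁ 1 - Pi.single k₂ 1 + Pi.single k₃ 1)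
     :
    ∀ j : Fin (n + 2), 0 < j → j ≠ k₃ →
      ∀ vj : Fin (n + 2) → ℤ, IsStdBasisVec σ j vj →
        0 ≤ dotF vj (φ (Pi.single 0 1) : Fin (n + 2) → ℤ) := by
  intro j hj hjk₃ vj hvj
  obtain ⟨hmono, hnn, -⟩ := hσ
  have hv1 : 0 < (k₁ : ℕ) := by simpa using Fin.lt_def.mp hk₁
  have hv12 : (k₁ : ℕ) < (k₂ : ℕ) := Fin.lt_def.mp hk₁₂
  have hv23 : (k₂ : ℕ) < (k₃ : ℕ) := Fin.lt_def.mp hk₂₃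
  have hvj0 : 0 < (j : ℕ) := by simpa using Fin.lt_def.mp hj
  have hjk3v : (j : ℕ) ≠ (k₃ : ℕ) := fun h => hjk₃ (Fin.ext h)
  have heven := even_pairing n aa σ φ hφ
  have hx0perp : dotF (φ (Pi.single 0 1) : Fin (n + 2) → ℤ) σ = 0 :=
    (φ (Pi.single 0 1)).2
  rcases hvj with ⟨-, rfl⟩ | ⟨-, A, ⟨hAsub, hAsum, hAmax⟩, rfl⟩
  · -- tight case
    have h0 : tightVec (n + 2) j 0 = 2 := by
      have hne : (0 : Fin (n + 2)) ≠ j := fun h => by rw [← h] at hj; exact lt_irrefl _ hj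
      simp [tightVec, hne, hj]
    rcases hx0 with h | h
    · rw [h, dotF_combo_pos, h0, tightVec_apply j k₁ (by omega),
        tightVec_apply j k₂ (by omega), tightVec_apply j k₃ (by omega)]
      split_ifs <;> omega
    · rw [h, dotF_combo_neg, h0, tightVec_apply j k₁ (by omega),
        tightVec_apply j k₂ (by omega), tightVec_apply j k₃ (by omega)]
      split_ifs <;> omega
  · -- subset case
    have hjA : j ∉ A := fun h => absurd (hAsub h) (by simp)
    have hperp := subsetVec_perp σ j A hjA hAsum
    have hmemA : ∀ i ∈ A, (i : ℕ) < (j : ℕ) := fun i hi =>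
      Fin.lt_def.mp (Finset.mem_Iio.mp (hAsub hi))
    have h0j : (0 : Fin (n + 2)) ≠ j := fun h => by rw [← h] at hj; exact lt_irrefl _ hj
    have hB0 : subsetVec (n + 2) A j 0 = if (0 : Fin (n + 2)) ∈ A then 1 else 0 :=
      subsetVec_apply_ne A j 0 h0j
    have hB0r : 0 ≤ subsetVec (n + 2) A j 0 ∧ subsetVec (n + 2) A j 0 ≤ 1 := by
      rw [hB0]; split_ifs <;> omega
    have hk3j : k₃ ≠ j := fun h => hjk₃ h.symm
    rcases hx0 with h | h
    · -- x₀ = e₀ + e_{k₁} + e_{k₂} - e_{k₃}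
      have hev := heven _ hperp
      rw [h, dotF_combo_pos] at hev ⊢
      by_cases e1 : k₁ = j
      · have hj1 : (j : ℕ) = (k₁ : ℕ) := (Fin.ext_iff.mp e1).symm
        have hk2j : k₂ ≠ j := fun h' => by have := Fin.ext_iff.mp h'; omega
        have hn2 : k₂ ∉ A := fun hm => by have := hmemA _ hm; omega
        have hn3 : k₃ ∉ A := fun hm => by have := hmemA _ hm; omega
        have h1 : subsetVec (n + 2) A j k₁ = -1 := by rw [e1]; exact subsetVec_apply_self A j
        have h2 : subsetVec (n + 2) A j k₂ = 0 := by
          rw [subsetVec_apply_ne A j k₂ hk2j, if_neg hn2]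
        have h3 : subsetVec (n + 2) A j k₃ = 0 := by
          rw [subsetVec_apply_ne A j k₃ hk3j, if_neg hn3]
        rw [h1, h2, h3] at hev ⊢
        omega
      · by_cases e2 : k₂ = j
        · have hj2 : (j : ℕ) = (k₂ : ℕ) := (Fin.ext_iff.mp e2).symm
          have hn3 : k₃ ∉ A := fun hm => by have := hmemA _ hm; omega
          have h2 : subsetVec (n + 2) A j k₂ = -1 := by rw [e2]; exact subsetVec_apply_self A j
          have h3 : subsetVec (n + 2) A j k₃ = 0 := by
            rw [subsetVec_apply_ne A j k₃ hk3j, if_neg hn3]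
          have h1r : 0 ≤ subsetVec (n + 2) A j k₁ ∧ subsetVec (n + 2) A j k₁ ≤ 1 := by
            rw [subsetVec_apply_ne A j k₁ e1]; split_ifs <;> omega
          rw [h2, h3] at hev ⊢
          omega
        · have h1r : 0 ≤ subsetVec (n + 2) A j k₁ ∧ subsetVec (n + 2) A j k₁ ≤ 1 := by
            rw [subsetVec_apply_ne A j k₁ e1]; split_ifs <;> omega
          have h2r : 0 ≤ subsetVec (n + 2) A j k₂ ∧ subsetVec (n + 2) A j k₂ ≤ 1 := by
            rw [subsetVec_apply_ne A j k₂ e2]; split_ifs <;> omega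
          have h3r : 0 ≤ subsetVec (n + 2) A j k₃ ∧ subsetVec (n + 2) A j k₃ ≤ 1 := by
            rw [subsetVec_apply_ne A j k₃ hk3j]; split_ifs <;> omega
          omega
    · -- x₀ = e₀ - e_{k₁} - e_{k₂} + e_{k₃}
      have hev := heven _ hperp
      rw [h, dotF_combo_neg] at hev ⊢
      have horth : σ 0 - σ k₁ - σ k₂ + σ k₃ = 0 := by
        rw [dotF_comm, h, dotF_combo_neg] at hx0perp; exact hx0perp
      by_cases e1 : k₁ = j
      · have hj1 : (j : ℕ) = (k₁ : ℕ) := (Fin.ext_iff.mp e1).symm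
        have hk2j : k₂ ≠ j := fun h' => by have := Fin.ext_iff.mp h'; omega
        have hn2 : k₂ ∉ A := fun hm => by have := hmemA _ hm; omega
        have hn3 : k₃ ∉ A := fun hm => by have := hmemA _ hm; omega
        have h1 : subsetVec (n + 2) A j k₁ = -1 := by rw [e1]; exact subsetVec_apply_self A j
        have h2 : subsetVec (n + 2) A j k₂ = 0 := by
          rw [subsetVec_apply_ne A j k₂ hk2j, if_neg hn2]
        have h3 : subsetVec (n + 2) A j k₃ = 0 := by
          rw [subsetVec_apply_ne A j k₃ hk3j, if_neg hn3]
        rw [h1, h2, h3]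
        omega
      · by_cases e2 : k₂ = j
        · have hj2 : (j : ℕ) = (k₂ : ℕ) := (Fin.ext_iff.mp e2).symm
          have hn3 : k₃ ∉ A := fun hm => by have := hmemA _ hm; omega
          have h2 : subsetVec (n + 2) A j k₂ = -1 := by rw [e2]; exact subsetVec_apply_self A j
          have h3 : subsetVec (n + 2) A j k₃ = 0 := by
            rw [subsetVec_apply_ne A j k₃ hk3j, if_neg hn3]
          have h1r : 0 ≤ subsetVec (n + 2) A j k₁ ∧ subsetVec (n + 2) A j k₁ ≤ 1 := by
            rw [subsetVec_apply_ne A j k₁ e1]; split_ifs <;> omega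
          rw [h2, h3]
          omega
        · by_cases hcrit : k₁ ∈ A ∧ k₂ ∈ A ∧ (0 : Fin (n + 2)) ∉ A ∧ k₃ ∉ A
          · exfalso
            obtain ⟨hm1, hm2, hm0, hm3⟩ := hcrit
            rcases lt_or_gt_of_ne (show (k₃ : ℕ) ≠ (j : ℕ) from fun hh => hjk3v hh.symm)
              with hlt | hgt
            · -- k₃ < j : contradicts maximality of A
              set E := (A.erase k₁).erase k₂ with hE
              have hne12 : k₂ ≠ k₁ := fun hh => by have := Fin.ext_iff.mp hh; omega
              have hk2E : k₂ ∈ A.erase k₁ := Finset.mem_erase.mpr ⟨hne12, hm2⟩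
              have hEsubA : ∀ x, x ∈ E → x ∈ A := fun x hx =>
                Finset.mem_of_mem_erase (Finset.mem_of_mem_erase hx)
              have hk3nE : k₃ ∉ E := fun hx => hm3 (hEsubA _ hx)
              have h0nI : (0 : Fin (n + 2)) ∉ insert k₃ E := by
                rw [Finset.mem_insert]
                push_neg
                exact ⟨fun hh => by have := Fin.ext_iff.mp hh; simp at this; omega,
                  fun hx => hm0 (hEsubA _ hx)⟩
              have hsumAσ : ∑ i ∈ A, σ i = σ k₁ + (σ k₂ + ∑ i ∈ E, σ i) := by
                rw [Finset.add_sum_erase _ σ hk2E, Finset.add_sum_erase _ σ hm1]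
              have hsumBσ : ∑ i ∈ insert (0 : Fin (n + 2)) (insert k₃ E), σ i
                  = σ 0 + (σ k₃ + ∑ i ∈ E, σ i) := by
                rw [Finset.sum_insert h0nI, Finset.sum_insert hk3nE]
              have hBsub : insert (0 : Fin (n + 2)) (insert k₃ E) ⊆ Finset.Iio j := by
                intro x hx
                rcases Finset.mem_insert.mp hx with rfl | hx
                · exact Finset.mem_Iio.mpr hj
                · rcases Finset.mem_insert.mp hx with rfl | hx
                  · exact Finset.mem_Iio.mpr (Fin.lt_def.mpr hlt)
                  · exact hAsub (hEsubA _ hx)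
              have hBsum : σ j = ∑ i ∈ insert (0 : Fin (n + 2)) (insert k₃ E), σ i := by
                rw [hsumBσ]; omega
              have hle2 := hAmax _ hBsub hBsum
              have hsumAp : ∑ i ∈ A, 2 ^ (i : ℕ)
                  = 2 ^ (k₁ : ℕ) + (2 ^ (k₂ : ℕ) + ∑ i ∈ E, 2 ^ (i : ℕ)) := by
                rw [Finset.add_sum_erase _ (fun i : Fin (n + 2) => 2 ^ (i : ℕ)) hk2E,
                  Finset.add_sum_erase _ (fun i : Fin (n + 2) => 2 ^ (i : ℕ)) hm1]
              have hsumBp : ∑ i ∈ insert (0 : Fin (n + 2)) (insert k₃ E), 2 ^ (i : ℕ)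
                  = 2 ^ ((0 : Fin (n + 2)) : ℕ) + (2 ^ (k₃ : ℕ) + ∑ i ∈ E, 2 ^ (i : ℕ)) := by
                rw [Finset.sum_insert h0nI, Finset.sum_insert hk3nE]
              rw [hsumAp, hsumBp] at hle2
              have hz : ((0 : Fin (n + 2)) : ℕ) = 0 := rfl
              rw [hz] at hle2
              have p1 : 2 ^ (k₁ : ℕ) < 2 ^ (k₂ : ℕ) :=
                Nat.pow_lt_pow_right (by norm_num) hv12
              have p2 : 2 ^ (k₂ : ℕ) * 2 ≤ 2 ^ (k₃ : ℕ) := by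
                rw [← pow_succ]; exact Nat.pow_le_pow_right (by norm_num) (by omega)
              omega
            · -- j < k₃ : forces σ₀ = 0, contradicting parity
              have hσ0 : σ 0 = 0 := by
                have hsub : ({k₁, k₂} : Finset (Fin (n + 2))) ⊆ A := by
                  intro x hx
                  rcases Finset.mem_insert.mp hx with rfl | hx
                  · exact hm1
                  · rw [Finset.mem_singleton.mp hx]; exact hm2
                have hps : ∑ i ∈ ({k₁, k₂} : Finset (Fin (n + 2))), σ i = σ k₁ + σ k₂ :=
                  Finset.sum_pair (fun hh => by have := Fin.ext_iff.mp hh; omega)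
                have hle : σ k₁ + σ k₂ ≤ ∑ i ∈ A, σ i := by
                  rw [← hps]
                  exact Finset.sum_le_sum_of_subset_of_nonneg hsub (fun i _ _ => hnn i)
                have hjk : σ j ≤ σ k₃ := hmono (le_of_lt (Fin.lt_def.mpr hgt))
                have h00 : 0 ≤ σ 0 := hnn 0
                omega
              have hp0 : dotF (Pi.single (0 : Fin (n + 2)) 1) σ = 0 := by
                rw [dotF_comm, dotF_single_right]; exact hσ0
              have hev0 := heven _ hp0
              rw [h, dotF_combo_neg] at hev0
              have hk10 : k₁ ≠ 0 := fun hh => by rw [hh] at hv1; simp at hv1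
              have hk20 : k₂ ≠ 0 := fun hh => by rw [hh] at hv12; simp at hv12
              have hk30 : k₃ ≠ 0 := fun hh => by rw [hh] at hv23; simp at hv23
              rw [Pi.single_eq_same, Pi.single_eq_of_ne hk10, Pi.single_eq_of_ne hk20,
                Pi.single_eq_of_ne hk30] at hev0
              omega
          · have h1 : subsetVec (n + 2) A j k₁ = if k₁ ∈ A then 1 else 0 :=
              subsetVec_apply_ne A j k₁ e1
            have h2 : subsetVec (n + 2) A j k₂ = if k₂ ∈ A then 1 else 0 :=
              subsetVec_apply_ne A j k₂ e2
            have h3 : subsetVec (n + 2) A j k₃ = if k₃ ∈ A then 1 else 0 :=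
              subsetVec_apply_ne A j k₃ hk3j
            rw [hB0, h1, h2, h3] at hev ⊢
            by_cases q0 : (0 : Fin (n + 2)) ∈ A <;> by_cases q1 : k₁ ∈ A <;>
              by_cases q2 : k₂ ∈ A <;> by_cases q3 : k₃ ∈ A <;>
              simp only [q0, q1, q2, q3, if_true, if_false] at hev ⊢ <;>
              first
                | omega
                | exact absurd ⟨q1, q2, q0, q3⟩ hcrit

end Prism
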